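/- Score-matching integral identity: let p be a smooth strictly positive probability density on ℝⁿ, s : ℝⁿ → ℝⁿ a smooth compactly supported vector field, and g ∈ ℝ. Then ∫ ((g²/2)‖s(x)‖² + g² (∇·s)(x)) p(x) dx = ∫ ((g²/2)‖s(x) − ∇log p(x)‖² − (g²/2)‖∇log p(x)‖²) p(x) dx. -/

import Mathlib

open scoped BigOperators RealInnerProductSpace

/-- Divergence of a vector field on `ℝⁿ`: `∇·F = Σᵢ ∂Fᵢ/∂xᵢ`. -/
noncomputable def diverg {n : ℕ} (F : EuclideanSpace ℝ (Fin n) → EuclideanSpace ℝ (Fin n))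
    (x : EuclideanSpace ℝ (Fin n)) : ℝ :=
  ∑ i, fderiv ℝ F x (EuclideanSpace.single i 1) i

/-- Laplacian `Δf = ∇·∇f`. -/
noncomputable def lap {n : ℕ} (f : EuclideanSpace ℝ (Fin n) → ℝ)
    (x : EuclideanSpace ℝ (Fin n)) : ℝ :=
  diverg (fun y => gradient f y) x

open MeasureTheory

lemma inner_gradient_eq {n : ℕ} (f : EuclideanSpace ℝ (Fin n) → ℝ)
    (x v : EuclideanSpace ℝ (Fin n)) : ⟪gradient f x, v⟫ = fderiv ℝ f x v := by
  rw [gradient]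
  exact InnerProductSpace.toDual_symm_apply

/-- score-matching integral identity:
`∫ ((g²/2)‖s‖² + g²(∇·s)) p = ∫ ((g²/2)‖s − ∇log p‖² − (g²/2)‖∇log p‖²) p`. -/
theorem stmt_10 {n : ℕ} (p : EuclideanSpace ℝ (Fin n) → ℝ)
    (s : EuclideanSpace ℝ (Fin n) → EuclideanSpace ℝ (Fin n)) (g : ℝ)
    (hp : ContDiff ℝ 1 p) (hppos : ∀ x, 0 < p x) (hpint : Integrable p)
    (hpnorm : ∫ x, p x = 1)
    (hs : ContDiff ℝ 1 s) (hssupp : HasCompactSupport s) :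
    ∫ x, (g ^ 2 / 2 * ‖s x‖ ^ 2 + g ^ 2 * diverg s x) * p x
      = ∫ x, (g ^ 2 / 2 * ‖s x - gradient (fun y => Real.log (p y)) x‖ ^ 2
          - g ^ 2 / 2 * ‖gradient (fun y => Real.log (p y)) x‖ ^ 2) * p x := by
  have hpd : Differentiable ℝ p := hp.differentiable one_ne_zero
  have hsd : Differentiable ℝ s := hs.differentiable one_ne_zero
  set L : EuclideanSpace ℝ (Fin n) → EuclideanSpace ℝ (Fin n) :=
    fun x => gradient (fun y => Real.log (p y)) x with hL
  -- basic continuity facts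
  have contp : Continuous p := hp.continuous
  have conts : Continuous s := hs.continuous
  have contDs : Continuous (fun x => fderiv ℝ s x) := hs.continuous_fderiv one_ne_zero
  have contDp : Continuous (fun x => fderiv ℝ p x) := hp.continuous_fderiv one_ne_zero
  -- compact support helper
  have hcs : ∀ (f : EuclideanSpace ℝ (Fin n) → ℝ), (∀ x, s x = 0 → f x = 0) →
      HasCompactSupport f := by
    intro f hf
    exact hssupp.mono (fun x hx h0 => hx (hf x h0))
  have hcsD : HasCompactSupport (fderiv ℝ s) := hssupp.fderiv (𝕜 := ℝ)
  have hcsD' : ∀ (f : EuclideanSpace ℝ (Fin n) → ℝ),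
      (∀ x, fderiv ℝ s x = 0 → f x = 0) → HasCompactSupport f := by
    intro f hf
    exact hcsD.mono (fun x hx h0 => hx (hf x h0))
  -- coordinate fderiv
  have hco : ∀ (i : Fin n) (x), fderiv ℝ (fun y => s y i) x
      = (EuclideanSpace.proj i (𝕜 := ℝ)).comp (fderiv ℝ s x) := by
    intro i x
    exact ((EuclideanSpace.proj i (𝕜 := ℝ)).hasFDerivAt.comp x (hsd x).hasFDerivAt).fderiv
  -- pointwise identity for the RHS integrand
  have key : ∀ x, (g ^ 2 / 2 * ‖s x - L x‖ ^ 2 - g ^ 2 / 2 * ‖L x‖ ^ 2) * p x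
      = g ^ 2 / 2 * ‖s x‖ ^ 2 * p x - g ^ 2 * fderiv ℝ p x (s x) := by
    intro x
    have hlog : fderiv ℝ (fun y => Real.log (p y)) x = (p x)⁻¹ • fderiv ℝ p x :=
      ((hpd x).hasFDerivAt.log (hppos x).ne').fderiv
    have h1 : ⟪s x, L x⟫ * p x = fderiv ℝ p x (s x) := by
      rw [real_inner_comm, hL, inner_gradient_eq, hlog]
      simp only [ContinuousLinearMap.smul_apply, smul_eq_mul]
      field_simp
      rw [mul_div_cancel_left₀ _ (hppos x).ne']
    rw [norm_sub_sq_real]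
    linear_combination (-(g ^ 2)) * h1
  -- integrands and their integrability
  have intC : Integrable (fun x => g ^ 2 / 2 * ‖s x‖ ^ 2 * p x) := by
    apply Continuous.integrable_of_hasCompactSupport
    · exact (continuous_const.mul (conts.norm.pow 2)).mul contp
    · exact hcs _ (fun x h0 => by simp [h0])
  have contdiv : Continuous (diverg s) := by
    unfold diverg
    exact continuous_finset_sum _ fun i _ =>
      (PiLp.continuous_apply 2 _ i).comp (contDs.clm_apply continuous_const)
  have intD : Integrable (fun x => diverg s x * p x) := by
    apply Continuous.integrable_of_hasCompactSupport (contdiv.mul contp)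
    exact hcsD' _ (fun x h0 => by simp [diverg, h0])
  have intG : Integrable (fun x => fderiv ℝ p x (s x)) := by
    apply Continuous.integrable_of_hasCompactSupport (contDp.clm_apply conts)
    exact hcs _ (fun x h0 => by simp [h0])
  -- integration by parts, coordinatewise
  have ibp : ∀ i : Fin n, ∫ x, s x i * fderiv ℝ p x (EuclideanSpace.single i 1)
      = - ∫ x, fderiv ℝ s x (EuclideanSpace.single i 1) i * p x := by
    intro i
    have conti : Continuous (fun x => s x i) := (PiLp.continuous_apply 2 _ i).comp conts
    have contdi : Continuous (fun x => fderiv ℝ s x (EuclideanSpace.single i 1) i) :=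
      (PiLp.continuous_apply 2 _ i).comp (contDs.clm_apply continuous_const)
    have h := integral_mul_fderiv_eq_neg_fderiv_mul_of_integrable
      (f := fun x => s x i) (g := p) (v := EuclideanSpace.single i 1)
      (μ := volume) ?_ ?_ ?_ ?_ (fun x _ => hpd x)
    · simp only [hco] at h
      exact h
    · apply Continuous.integrable_of_hasCompactSupport
      · simp only [hco]
        exact contdi.mul contp
      · apply hcsD' _ (fun x h0 => ?_)
        simp [hco, h0]
    · apply Continuous.integrable_of_hasCompactSupport
        (conti.mul (contDp.clm_apply continuous_const))
      exact hcs _ (fun x h0 => by simp [h0])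
    · apply Continuous.integrable_of_hasCompactSupport (conti.mul contp)
      exact hcs _ (fun x h0 => by simp [h0])
    · exact fun x _ => ((EuclideanSpace.proj i (𝕜 := ℝ)).differentiable.comp hsd) x
  -- decomposition of fderiv p x (s x)
  have hdec : ∀ x, fderiv ℝ p x (s x)
      = ∑ i, s x i * fderiv ℝ p x (EuclideanSpace.single i 1) := by
    intro x
    conv_lhs => rw [← (EuclideanSpace.basisFun (Fin n) ℝ).sum_repr (s x)]
    rw [map_sum]
    refine Finset.sum_congr rfl fun i _ => ?_
    rw [EuclideanSpace.basisFun_apply, _root_.map_smul]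
    rfl
  -- the divergence identity: ∫ diverg s * p = - ∫ fderiv p (s)
  have hdiv : ∫ x, diverg s x * p x = - ∫ x, fderiv ℝ p x (s x) := by
    have inti : ∀ i : Fin n, Integrable
        (fun x => fderiv ℝ s x (EuclideanSpace.single i 1) i * p x) := by
      intro i
      apply Continuous.integrable_of_hasCompactSupport
        (((PiLp.continuous_apply 2 _ i).comp (contDs.clm_apply continuous_const)).mul contp)
      exact hcsD' _ (fun x h0 => by simp [h0])
    have intgi : ∀ i : Fin n, Integrable
        (fun x => s x i * fderiv ℝ p x (EuclideanSpace.single i 1)) := by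
      intro i
      apply Continuous.integrable_of_hasCompactSupport
        (((PiLp.continuous_apply 2 _ i).comp conts).mul (contDp.clm_apply continuous_const))
      exact hcs _ (fun x h0 => by simp [h0])
    calc ∫ x, diverg s x * p x
        = ∫ x, ∑ i, fderiv ℝ s x (EuclideanSpace.single i 1) i * p x := by
          simp only [diverg, Finset.sum_mul]
      _ = ∑ i, ∫ x, fderiv ℝ s x (EuclideanSpace.single i 1) i * p x :=
          integral_finset_sum _ (fun i _ => inti i)
      _ = ∑ i, - ∫ x, s x i * fderiv ℝ p x (EuclideanSpace.single i 1) := by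
          refine Finset.sum_congr rfl fun i _ => ?_
          rw [ibp i, neg_neg]
      _ = - ∑ i, ∫ x, s x i * fderiv ℝ p x (EuclideanSpace.single i 1) := by
          rw [Finset.sum_neg_distrib]
      _ = - ∫ x, ∑ i, s x i * fderiv ℝ p x (EuclideanSpace.single i 1) := by
          rw [integral_finset_sum _ (fun i _ => intgi i)]
      _ = - ∫ x, fderiv ℝ p x (s x) := by
          congr 1
          exact integral_congr_ae (Filter.Eventually.of_forall fun x => (hdec x).symm)
  -- put everything together
  calc ∫ x, (g ^ 2 / 2 * ‖s x‖ ^ 2 + g ^ 2 * diverg s x) * p x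
      = ∫ x, (g ^ 2 / 2 * ‖s x‖ ^ 2 * p x + g ^ 2 * (diverg s x * p x)) := by
        congr 1; ext x; ring
    _ = (∫ x, g ^ 2 / 2 * ‖s x‖ ^ 2 * p x) + g ^ 2 * ∫ x, diverg s x * p x := by
        rw [integral_add intC (intD.const_mul _), integral_const_mul]
    _ = (∫ x, g ^ 2 / 2 * ‖s x‖ ^ 2 * p x) - g ^ 2 * ∫ x, fderiv ℝ p x (s x) := by
        rw [hdiv]; ring
    _ = ∫ x, (g ^ 2 / 2 * ‖s x‖ ^ 2 * p x - g ^ 2 * fderiv ℝ p x (s x)) := by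
        rw [integral_sub intC (intG.const_mul _), integral_const_mul]
    _ = ∫ x, (g ^ 2 / 2 * ‖s x - L x‖ ^ 2 - g ^ 2 / 2 * ‖L x‖ ^ 2) * p x := by
        exact (integral_congr_ae (Filter.Eventually.of_forall fun x => (key x))).symm
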